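/- If 0 < t < 2/3, then the hypersurface model {Re w = |z|⁴ + 2t·Re(z³·conj z)} ⊂ ℂ² is admissible: there exist c ∈ ℝ, V ∈ ℂ∖{0}, and a polynomial Q ∈ ℂ[X] such that for all ζ with |ζ| = 1, ζ³ · c · (4(1−ζ)(1−conj ζ)·V·conj V + 3t(1−ζ)²V² + 3t(1−conj ζ)²(conj V)²) = (1−conj ζ)² · Q(ζ), and Q(ζ) ≠ 0 for every |ζ| = 1. -/

import Mathlib

open ComplexConjugate

noncomputable section

theorem stmt4 (t : ℝ) (ht0 : 0 < t) (ht : t < 2 / 3) :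
    ∃ (c : ℝ) (V : ℂ), V ≠ 0 ∧ ∃ Q : Polynomial ℂ,
      ∀ ζ : ℂ, ‖ζ‖ = 1 →
        ζ ^ 3 * (c : ℂ) *
            (4 * (1 - ζ) * (1 - conj ζ) * V * conj V +
              3 * (t : ℂ) * (1 - ζ) ^ 2 * V ^ 2 +
              3 * (t : ℂ) * (1 - conj ζ) ^ 2 * (conj V) ^ 2)
          = (1 - conj ζ) ^ 2 * Q.eval ζ ∧ Q.eval ζ ≠ 0 := by
  refine ⟨1, 1, one_ne_zero,
    Polynomial.C (3 * (t:ℂ)) * Polynomial.X ^ 5 - 4 * Polynomial.X ^ 4 +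
      Polynomial.C (3 * (t:ℂ)) * Polynomial.X ^ 3, ?_⟩
  intro ζ hζ
  have hζ0 : ζ ≠ 0 := by
    intro h; rw [h, norm_zero] at hζ; norm_num at hζ
  have hconj : conj ζ = ζ⁻¹ := by
    rw [← Complex.inv_eq_conj hζ]
  have hfac : 3 * (t:ℂ) * ζ ^ 2 - 4 * ζ + 3 * t ≠ 0 := by
    intro h
    have h4 : (4:ℂ) * ζ = 3 * t * (ζ ^ 2 + 1) := by linear_combination -h
    have hn : ‖(4:ℂ) * ζ‖ = ‖(3 * (t:ℂ)) * (ζ ^ 2 + 1)‖ := by rw [h4]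
    rw [norm_mul, norm_mul, hζ, mul_one] at hn
    have h3t : ‖(3 * (t:ℂ))‖ = 3 * t := by
      rw [show (3 * (t:ℂ)) = ((3 * t : ℝ) : ℂ) by push_cast; ring,
        Complex.norm_real]
      exact abs_of_pos (by linarith)
    have hle : ‖ζ ^ 2 + 1‖ ≤ 2 := by
      calc ‖ζ ^ 2 + 1‖ ≤ ‖ζ ^ 2‖ + ‖(1:ℂ)‖ := norm_add_le _ _
        _ = 2 := by rw [norm_pow, hζ]; norm_num
    have h4' : ‖(4:ℂ)‖ = 4 := by norm_num
    rw [h4', h3t] at hn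
    nlinarith
  constructor
  · simp only [Polynomial.eval_add, Polynomial.eval_sub, Polynomial.eval_mul,
      Polynomial.eval_pow, Polynomial.eval_C, Polynomial.eval_X, Polynomial.eval_ofNat,
      hconj, Complex.ofReal_one, map_one]
    field_simp
    ring
  · simp only [Polynomial.eval_add, Polynomial.eval_sub, Polynomial.eval_mul,
      Polynomial.eval_pow, Polynomial.eval_C, Polynomial.eval_X, Polynomial.eval_ofNat]
    intro h
    apply hfac
    have : ζ ^ 3 * (3 * (t:ℂ) * ζ ^ 2 - 4 * ζ + 3 * t) = 0 := by linear_combination h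
    rcases mul_eq_zero.mp this with h' | h'
    · exact absurd (pow_eq_zero_iff (by norm_num) |>.mp h') hζ0
    · exact h'
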